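/- Let λ = (kπ₁,…,kπ_t,1^r) with positive integers k, π₁,…,π_t and 1 ≤ r ≤ k−1. Then the pair (λ, 1) satisfies the cutting condition. -/
import Mathlib


/-- A composition of `n`: an ordered list of positive integers summing to `n`. -/
def IsComposition (n : ℕ) (l : List ℕ) : Prop :=
  (∀ x ∈ l, 0 < x) ∧ l.sum = n

/-- Refinement order on compositions: `Refines x y` means `x ≤ y` in the paper's order,
i.e. the blocks of `x` are sums of consecutive runs of blocks of `y`.  The witness `P`
is the list of (nonempty) consecutive runs. -/
def Refines (x y : List ℕ) : Prop :=
  ∃ P : List (List ℕ), (∀ p ∈ P, p ≠ []) ∧ P.flatten = y ∧ P.map List.sum = x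

/-- `Dset lam` is the poset `D_λ`: all compositions lying below some composition of type `lam`. -/
def Dset (lam : Multiset ℕ) : Set (List ℕ) :=
  {x | ∃ y : List ℕ, (y : Multiset ℕ) = lam ∧ Refines x y}

/-- The set of cut positions `{i₁,…,i_{l(x)-1}}` of a refinement witness `P`. -/
def cutSet (P : List (List ℕ)) : Finset ℕ :=
  ((List.range (P.length - 1)).map (fun k => ((P.take (k + 1)).map List.length).sum)).toFinset

/-- The block at position `i` of the composition `l` is independent: any resonance with
`l[i]` on the left side forces a trivial resonance with a block on the right side. -/
def IsIndepAt (l : List ℕ) (i : ℕ) : Prop :=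
  ∀ I J : Finset ℕ, I.Nonempty → J.Nonempty → Disjoint I J →
    (∀ a ∈ I ∪ J, a < l.length) → i ∈ I →
    (I.sum fun a => l.getD a 0) = (J.sum fun a => l.getD a 0) →
    ∃ q ∈ J, l.getD q 0 = l.getD i 0

/-- `ι(x)`: the smallest index of a block of `x` equal to `v` (`⊤` if none). -/
noncomputable def iotaFn (v : ℕ) (x : List ℕ) : ℕ∞ :=
  sInf {j : ℕ∞ | ∃ k : ℕ, j = (k : ℕ∞) ∧ x.getD k 0 = v}

/-- Block `k` of `x ∈ D_λ` contains a copy of `v`: for every composition of type `lam`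
refining `x`, the run summing to block `k` contains an entry equal to `v`. -/
def HasCopy (lam : Multiset ℕ) (v : ℕ) (x : List ℕ) (k : ℕ) : Prop :=
  ∀ P : List (List ℕ), (∀ p ∈ P, p ≠ []) → ((P.flatten : Multiset ℕ) = lam) →
    P.map List.sum = x → v ∈ P.getD k []

/-- `γ(x)`: the smallest index of a block of `x` strictly larger than `v` containing
at least one copy of `v` (`⊤` if none). -/
noncomputable def gammaFn (lam : Multiset ℕ) (v : ℕ) (x : List ℕ) : ℕ∞ :=
  sInf {j : ℕ∞ | ∃ k : ℕ, j = (k : ℕ∞) ∧ v < x.getD k 0 ∧ HasCopy lam v x k}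

/-- Split block `j` of `x` into `v` followed by the remainder. -/
def splitBlock (v : ℕ) (x : List ℕ) (j : ℕ) : List ℕ :=
  x.take j ++ [v, x.getD j 0 - v] ++ x.drop (j + 1)

/-- A number partition of `n`: a multiset of positive integers summing to `n`. -/
def IsPartition (n : ℕ) (lam : Multiset ℕ) : Prop :=
  (∀ a ∈ lam, 0 < a) ∧ lam.sum = n

/-- Refinement order on number partitions: `PartCoarsen mu lam` means `lam ≥ mu`,
i.e. the blocks of `lam` can be grouped into disjoint nonempty sets summing to the
blocks of `mu`. -/
def PartCoarsen (mu lam : Multiset ℕ) : Prop :=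
  ∃ P : Multiset (Multiset ℕ), (∀ p ∈ P, p ≠ 0) ∧ P.sum = lam ∧ P.map Multiset.sum = mu

/-- The cutting condition for the pair `(lam, pb)` where `pb` is a block of `lam`. -/
def CuttingCondition (lam : Multiset ℕ) (pb : ℕ) : Prop :=
  pb ∈ lam ∧
  ∀ (mu : Multiset ℕ) (eta : ℕ) (I : Multiset ℕ),
    PartCoarsen mu lam → eta ∈ mu → I ≠ 0 → I ≤ lam.erase pb → eta = pb + I.sum →
      PartCoarsen (pb ::ₘ (I.sum ::ₘ mu.erase eta)) lam

/-- The vector in `ℚ^l` associated to the resonance `(I, J)`. -/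
def resVec (l : ℕ) (I J : Finset (Fin l)) : Fin l → ℚ :=
  fun i => if i ∈ I then 1 else if i ∈ J then -1 else 0

/-- for λ = (kπ₁,…,kπ_t,1^r) with 1 ≤ r ≤ k - 1, the pair (λ, 1)
satisfies the cutting condition. -/
theorem cutting_condition_ones (k t r : ℕ) (pi : ℕ → ℕ)
    (hk : 0 < k) (hpi : ∀ i, 1 ≤ i → i ≤ t → 0 < pi i)
    (hr1 : 1 ≤ r) (hrk : r ≤ k - 1)
    (lam : Multiset ℕ)
    (hlam : lam = (Finset.Icc 1 t).sum (fun i => ({k * pi i} : Multiset ℕ)) +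
      Multiset.replicate r 1) :
    CuttingCondition lam 1 := by
  have hk2 : 2 ≤ k := by omega
  -- every element of lam is either 1 or a positive multiple of k
  have hmem : ∀ a ∈ lam, a = 1 ∨ (k ∣ a ∧ 0 < a) := by
    intro a ha
    rw [hlam, Multiset.mem_add] at ha
    rcases ha with h | h
    · right
      rw [Multiset.mem_sum] at h
      obtain ⟨i, hi, hai⟩ := h
      rw [Multiset.mem_singleton] at hai
      obtain ⟨hi1, hi2⟩ := Finset.mem_Icc.mp hi
      have hp := hpi i hi1 hi2
      subst hai
      exact ⟨⟨pi i, rfl⟩, by positivity⟩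
    · left; exact Multiset.eq_of_mem_replicate h
  have hcount : lam.count 1 = r := by
    rw [hlam, Multiset.count_add, Multiset.count_replicate, if_pos rfl]
    have h0 : Multiset.count 1 ((Finset.Icc 1 t).sum fun i => ({k * pi i} : Multiset ℕ)) = 0 := by
      rw [Multiset.count_eq_zero]
      intro h
      rw [Multiset.mem_sum] at h
      obtain ⟨i, hi, hai⟩ := h
      rw [Multiset.mem_singleton] at hai
      obtain ⟨hi1, hi2⟩ := Finset.mem_Icc.mp hi
      have hp := hpi i hi1 hi2
      nlinarith [hai.symm]
    omega
  constructor
  · exact Multiset.count_pos.mp (by omega)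
  intro mu eta I hcoarse heta hI hIle hetaeq
  obtain ⟨P, hPne, hPsum, hPmap⟩ := hcoarse
  rw [← hPmap, Multiset.mem_map] at heta
  obtain ⟨G, hGP, hGsum⟩ := heta
  have hIlam : I ≤ lam := le_trans hIle (Multiset.erase_le _ _)
  -- I.sum > 0
  have hIpos : 0 < I.sum := by
    obtain ⟨a, ha⟩ := Multiset.exists_mem_of_ne_zero hI
    have haL : a ∈ lam := Multiset.mem_of_le hIlam ha
    have hapos : 0 < a := by rcases hmem a haL with h | h; omega; exact h.2
    have := Multiset.single_le_sum (fun x _ => Nat.zero_le x) a ha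
    omega
  have hGle : G ≤ lam := hPsum ▸ Multiset.single_le_sum (fun x _ => Multiset.zero_le x) G hGP
  -- G contains a 1
  have h1G : (1 : ℕ) ∈ G := by
    by_contra h1
    have hdvd : k ∣ G.sum := by
      refine Multiset.dvd_sum fun a ha => ?_
      have haL : a ∈ lam := Multiset.mem_of_le hGle ha
      rcases hmem a haL with h | h
      · exact absurd (h ▸ ha) h1
      · exact h.1
    -- decompose I.sum as (count 1 I) + multiple of k
    have hsplit : I.filter (fun a => a = 1) + I.filter (fun a => ¬ a = 1) = I :=
      Multiset.filter_add_not _ I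
    have hsum1 : (I.filter (fun a => a = 1)).sum = I.count 1 := by
      have h := Multiset.filter_eq' I 1
      rw [h, Multiset.sum_replicate, smul_eq_mul, mul_one]
    have hdvd2 : k ∣ (I.filter (fun a => ¬ a = 1)).sum := by
      refine Multiset.dvd_sum fun a ha => ?_
      have hne := (Multiset.mem_filter.mp ha).2
      have haL : a ∈ lam := Multiset.mem_of_le hIlam (Multiset.mem_of_mem_filter ha)
      rcases hmem a haL with h | h
      · exact absurd h hne
      · exact h.1
    have hIsum : I.sum = I.count 1 + (I.filter (fun a => ¬ a = 1)).sum := by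
      conv_lhs => rw [← hsplit]
      rw [Multiset.sum_add, hsum1]
    have hcle : I.count 1 ≤ r - 1 := by
      have h1 := Multiset.count_le_of_le 1 hIle
      rw [Multiset.count_erase_self, hcount] at h1
      exact h1
    have hGeta : G.sum = eta := hGsum
    obtain ⟨m, hm⟩ := hdvd
    obtain ⟨m', hm'⟩ := hdvd2
    have : eta = 1 + I.count 1 + k * m' := by omega
    have hlt : 1 + I.count 1 < k := by omega
    have hmm' : k * m' < k * m := by omega
    have hmm : m' < m := Nat.lt_of_mul_lt_mul_left hmm'
    have h2 : k * (m' + 1) ≤ k * m := Nat.mul_le_mul_left k hmm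
    rw [Nat.mul_add, Nat.mul_one] at h2
    omega
  -- construct the new grouping
  refine ⟨{1} ::ₘ (G.erase 1) ::ₘ P.erase G, ?_, ?_, ?_⟩
  · intro p hp
    rcases Multiset.mem_cons.mp hp with rfl | hp
    · simp
    rcases Multiset.mem_cons.mp hp with rfl | hp
    · intro h0
      have hG1 : G.sum = 1 + (G.erase 1).sum := by
        conv_lhs => rw [← Multiset.cons_erase h1G]
        rw [Multiset.sum_cons]
      rw [h0, Multiset.sum_zero] at hG1
      omega
    · exact hPne p (Multiset.mem_of_mem_erase hp)
  · rw [Multiset.sum_cons, Multiset.sum_cons, ← hPsum]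
    conv_rhs => rw [← Multiset.cons_erase hGP, Multiset.sum_cons]
    rw [Multiset.singleton_add, ← Multiset.cons_add, Multiset.cons_erase h1G]
  · rw [Multiset.map_cons, Multiset.map_cons]
    have hsum1 : ({1} : Multiset ℕ).sum = 1 := by simp
    rw [hsum1]
    congr 1
    congr 1
    · have hG1 : G.sum = 1 + (G.erase 1).sum := by
        conv_lhs => rw [← Multiset.cons_erase h1G]
        rw [Multiset.sum_cons]
      omega
    · rw [← hPmap]
      conv_rhs => rw [← Multiset.cons_erase hGP]
      rw [Multiset.map_cons, hGsum, Multiset.erase_cons_head]
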